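/- For smooth functions F, G on the cotangent bundle T*Q with canonical symplectic form ω = -dA (A the canonical one-form) and Hamiltonian vector fields X_F, X_G, one has d(F - ι_{X_F}A)·X_G - d(G - ι_{X_G}A)·X_F = {F,G} - ι_{X_{F,G}}A, where {F,G} = ω(X_F, X_G). In particular, the map F ↦ (X_F, F - ι_{X_F}A) is a Lie algebra homomorphism from (C^∞(T*Q), {·,·}) to the semidirect-product Lie algebra of vector fields and functions with bracket [(X₁,φ₁),(X₂,φ₂)] = ([X₂,X₁], dφ₁·X₂ - dφ₂·X₁). -/

import Mathlib

open scoped ContDiff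

/-- Partial derivative in the first (`q`) variable on phase space `T*ℝ ≅ ℝ × ℝ`. -/
noncomputable def pd1 {E : Type*} [NormedAddCommGroup E] [NormedSpace ℝ E]
    (f : ℝ × ℝ → E) (z : ℝ × ℝ) : E := fderiv ℝ f z (1, 0)

/-- Partial derivative in the second (`p`) variable. -/
noncomputable def pd2 {E : Type*} [NormedAddCommGroup E] [NormedSpace ℝ E]
    (f : ℝ × ℝ → E) (z : ℝ × ℝ) : E := fderiv ℝ f z (0, 1)

/-- Canonical Poisson bracket `{F,G} = ∂_q F ∂_p G - ∂_p F ∂_q G = ω(X_F, X_G)`. -/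
noncomputable def pb (F G : ℝ × ℝ → ℝ) (z : ℝ × ℝ) : ℝ :=
  pd1 F z * pd2 G z - pd2 F z * pd1 G z

/-- `φ_F = F - ι_{X_F} A`, where `A = p dq`, `X_F = (∂_p F, -∂_q F)`, so `ι_{X_F}A = p ∂_p F`. -/
noncomputable def phiOf (F : ℝ × ℝ → ℝ) (z : ℝ × ℝ) : ℝ := F z - z.2 * pd2 F z

section helpers
variable {f g : ℝ × ℝ → ℝ} {z v w : ℝ × ℝ}

lemma hasFDerivAt_eval (hf : ContDiff ℝ ∞ f) (w z : ℝ × ℝ) :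
    HasFDerivAt (fun y => fderiv ℝ f y w)
      ((ContinuousLinearMap.apply ℝ ℝ w).comp (fderiv ℝ (fderiv ℝ f) z)) z := by
  have h1 : ContDiff ℝ ∞ (fderiv ℝ f) := hf.fderiv_right (by simp)
  exact (ContinuousLinearMap.apply ℝ ℝ w).hasFDerivAt.comp z
    (h1.differentiable (by simp) z).hasFDerivAt

lemma diff_eval (hf : ContDiff ℝ ∞ f) (w z : ℝ × ℝ) :
    DifferentiableAt ℝ (fun y => fderiv ℝ f y w) z :=
  (hasFDerivAt_eval hf w z).differentiableAt

lemma pd_pd (hf : ContDiff ℝ ∞ f) (v w z : ℝ × ℝ) :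
    fderiv ℝ (fun y => fderiv ℝ f y w) z v = fderiv ℝ (fderiv ℝ f) z v w := by
  rw [(hasFDerivAt_eval hf w z).fderiv]; rfl

lemma clairaut (hf : ContDiff ℝ ∞ f) (v w z : ℝ × ℝ) :
    fderiv ℝ (fderiv ℝ f) z v w = fderiv ℝ (fderiv ℝ f) z w v :=
  (hf.contDiffAt.isSymmSndFDerivAt (by simp [minSmoothness_of_isRCLikeNormedField]; exact WithTop.coe_le_coe.mpr le_top)) v w

lemma pd_mul (hf : DifferentiableAt ℝ f z) (hg : DifferentiableAt ℝ g z) (v : ℝ × ℝ) :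
    fderiv ℝ (fun y => f y * g y) z v = fderiv ℝ f z v * g z + f z * fderiv ℝ g z v := by
  rw [fderiv_fun_mul hf hg]; simp [mul_comm]; ring

lemma pd_sub (hf : DifferentiableAt ℝ f z) (hg : DifferentiableAt ℝ g z) (v : ℝ × ℝ) :
    fderiv ℝ (fun y => f y - g y) z v = fderiv ℝ f z v - fderiv ℝ g z v := by
  rw [fderiv_fun_sub hf hg]; rfl

lemma pd_neg (v : ℝ × ℝ) :
    fderiv ℝ (fun y => -(f y)) z v = -(fderiv ℝ f z v) := by
  rw [fderiv_fun_neg]; rfl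

lemma pd_snd (z v : ℝ × ℝ) : fderiv ℝ (fun y : ℝ × ℝ => y.2) z v = v.2 := by
  rw [(hasFDerivAt_snd).fderiv]; rfl

lemma diff_smooth (hf : ContDiff ℝ ∞ f) (z : ℝ × ℝ) : DifferentiableAt ℝ f z :=
  hf.differentiable (by simp) z

lemma pd_phi (hf : ContDiff ℝ ∞ f) (v z : ℝ × ℝ) :
    fderiv ℝ (phiOf f) z v = fderiv ℝ f z v -
      (v.2 * fderiv ℝ f z (0,1) + z.2 * fderiv ℝ (fderiv ℝ f) z v (0,1)) := by
  have h2 := diff_eval hf (0,1) z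
  have hs : DifferentiableAt ℝ (fun y : ℝ × ℝ => y.2) z := differentiableAt_snd
  unfold phiOf pd2
  rw [pd_sub (diff_smooth hf z) (hs.fun_mul h2), pd_mul hs h2, pd_snd, pd_pd hf]

lemma pd_pb (hf : ContDiff ℝ ∞ f) (hg : ContDiff ℝ ∞ g) (v z : ℝ × ℝ) :
    fderiv ℝ (pb f g) z v =
      (fderiv ℝ (fderiv ℝ f) z v (1,0) * fderiv ℝ g z (0,1)
        + fderiv ℝ f z (1,0) * fderiv ℝ (fderiv ℝ g) z v (0,1))
      - (fderiv ℝ (fderiv ℝ f) z v (0,1) * fderiv ℝ g z (1,0)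
        + fderiv ℝ f z (0,1) * fderiv ℝ (fderiv ℝ g) z v (1,0)) := by
  unfold pb pd1 pd2
  rw [pd_sub ((diff_eval hf (1,0) z).fun_mul (diff_eval hg (0,1) z))
      ((diff_eval hf (0,1) z).fun_mul (diff_eval hg (1,0) z)),
    pd_mul (diff_eval hf (1,0) z) (diff_eval hg (0,1) z),
    pd_mul (diff_eval hf (0,1) z) (diff_eval hg (1,0) z),
    pd_pd hf, pd_pd hf, pd_pd hg, pd_pd hg]

end helpers

/-- For smooth `F, G` on `T*Q` (here `Q = ℝ`, `T*Q = ℝ²` with `A = p dq`, `ω = -dA`,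
`X_F = (∂_p F, -∂_q F)`, `{F,G} = ω(X_F,X_G)`):
`d(F - ι_{X_F}A)·X_G - d(G - ι_{X_G}A)·X_F = {F,G} - ι_{X_{{F,G}}}A`
(note `dφ·X_G = {φ,G}`), and the map `F ↦ (X_F, F - ι_{X_F}A)` is a Lie algebra homomorphism
into the semidirect-product Lie algebra with bracket
`[(X₁,φ₁),(X₂,φ₂)] = ([X₂,X₁], dφ₁·X₂ - dφ₂·X₁)`, i.e. the Jacobi–Lie bracket
`[X_G, X_F] = X_G·∇X_F - X_F·∇X_G` equals `X_{{F,G}}` componentwise. -/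


theorem statement0 (F G : ℝ × ℝ → ℝ) (hF : ContDiff ℝ ∞ F) (hG : ContDiff ℝ ∞ G) :
    -- function part: d(φ_F)·X_G - d(φ_G)·X_F = {F,G} - p ∂_p {F,G}
    (∀ z : ℝ × ℝ,
      pb (phiOf F) G z - pb (phiOf G) F z = pb F G z - z.2 * pd2 (pb F G) z) ∧
    -- first component of [X_G, X_F] = X_{{F,G}}
    (∀ z : ℝ × ℝ,
      (pd2 G z * pd1 (fun w => pd2 F w) z + (-(pd1 G z)) * pd2 (fun w => pd2 F w) z)
        - (pd2 F z * pd1 (fun w => pd2 G w) z + (-(pd1 F z)) * pd2 (fun w => pd2 G w) z)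
        = pd2 (pb F G) z) ∧
    -- second component of [X_G, X_F] = X_{{F,G}}
    (∀ z : ℝ × ℝ,
      (pd2 G z * pd1 (fun w => -(pd1 F w)) z + (-(pd1 G z)) * pd2 (fun w => -(pd1 F w)) z)
        - (pd2 F z * pd1 (fun w => -(pd1 G w)) z + (-(pd1 F z)) * pd2 (fun w => -(pd1 G w)) z)
        = -(pd1 (pb F G) z)) := by
  refine ⟨fun z => ?_, fun z => ?_, fun z => ?_⟩
  · simp only [pb, pd1, pd2]
    rw [pd_phi hF (1,0) z, pd_phi hF (0,1) z, pd_phi hG (1,0) z, pd_phi hG (0,1) z,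
      pd_pb hF hG (0,1) z, clairaut hF (0,1) (1,0) z, clairaut hG (0,1) (1,0) z]
    ring
  · simp only [pb, pd1, pd2]
    rw [pd_pd hF (1,0) (0,1) z, pd_pd hF (0,1) (0,1) z, pd_pd hG (1,0) (0,1) z,
      pd_pd hG (0,1) (0,1) z, pd_pb hF hG (0,1) z,
      clairaut hF (0,1) (1,0) z, clairaut hG (0,1) (1,0) z]
    ring
  · simp only [pb, pd1, pd2]
    rw [pd_neg, pd_neg, pd_neg, pd_neg,
      pd_pd hF (1,0) (1,0) z, pd_pd hF (0,1) (1,0) z, pd_pd hG (1,0) (1,0) z,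
      pd_pd hG (0,1) (1,0) z, pd_pb hF hG (1,0) z,
      clairaut hF (1,0) (0,1) z, clairaut hG (1,0) (0,1) z]
    ring
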